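/- Let (M, dist) be a metric space modeling an MTS with states X, tasks ℓ_t : X → ℝ≥0 ∪ {∞}, and initial state x_0. Define the Follow-the-Prediction algorithm: given predictions p_1,...,p_T, at each time t it moves to x_t = argmin_{x ∈ X} (ℓ_t(x) + 2·dist(x, p_t)). Then for any offline sequence of states o_1,...,o_T starting from the same x_0, the total cost of FtP (movement plus service) is at most the total cost of the offline sequence plus 4·∑_{t=1}^T dist(p_t, o_t). -/

import Mathlib

open scoped ENNReal

/-- Total cost of an MTS state sequence `x` on tasks `ℓ` (task `ℓ (t+1)` served
at time `t+1` by state `x (t+1)`, movement measured by `edist`). -/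
noncomputable def mtsCost {X : Type*} [MetricSpace X]
    (ℓ : ℕ → X → ℝ≥0∞) (x : ℕ → X) (T : ℕ) : ℝ≥0∞ :=
  ∑ t ∈ Finset.range T, (edist (x t) (x (t + 1)) + ℓ (t + 1) (x (t + 1)))

/-- Per-step bound for Follow-the-Prediction, with potential `edist x o`. -/
lemma ftp_step_bound {X : Type*} [MetricSpace X] (ℓt : X → ℝ≥0∞) (pt xt x1 ot o1 : X)
    (hm : ℓt x1 + 2 * edist x1 pt ≤ ℓt o1 + 2 * edist o1 pt) :
    edist xt x1 + ℓt x1 + edist x1 o1 ≤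
      edist xt ot + edist ot o1 + ℓt o1 + 4 * edist pt o1 := by
  calc edist xt x1 + ℓt x1 + edist x1 o1
      ≤ (edist xt pt + edist pt x1) + ℓt x1 + (edist x1 pt + edist pt o1) := by
        gcongr <;> exact edist_triangle _ _ _
    _ = edist xt pt + (ℓt x1 + 2 * edist x1 pt) + edist pt o1 := by
        rw [edist_comm pt x1]; ring
    _ ≤ edist xt pt + (ℓt o1 + 2 * edist o1 pt) + edist pt o1 := by gcongr
    _ ≤ (edist xt ot + edist ot o1 + edist o1 pt) + (ℓt o1 + 2 * edist o1 pt) +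
          edist pt o1 := by gcongr; exact edist_triangle4 _ _ _ _
    _ = edist xt ot + edist ot o1 + ℓt o1 + 4 * edist pt o1 := by
        rw [edist_comm o1 pt]; ring

/-- **Follow-the-Prediction bound.** If at every time `t` the state `x t` minimizes
`ℓ_t(y) + 2·dist(y, p_t)`, then the total cost of FtP is at most the cost of any
offline sequence `o` (starting at the same initial state) plus `4·∑ dist(p_t, o_t)`. -/
theorem ftp_cost_bound {X : Type*} [MetricSpace X] (T : ℕ)
    (ℓ : ℕ → X → ℝ≥0∞) (p : ℕ → X) (x o : ℕ → X)
    (hstart : x 0 = o 0)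
    (hmin : ∀ t ∈ Finset.range T, ∀ y : X,
      ℓ (t + 1) (x (t + 1)) + 2 * edist (x (t + 1)) (p (t + 1)) ≤
        ℓ (t + 1) y + 2 * edist y (p (t + 1))) :
    mtsCost ℓ x T ≤
      mtsCost ℓ o T + 4 * ∑ t ∈ Finset.range T, edist (p (t + 1)) (o (t + 1)) := by
  have key : mtsCost ℓ x T + edist (x T) (o T) ≤
      mtsCost ℓ o T + 4 * ∑ t ∈ Finset.range T, edist (p (t + 1)) (o (t + 1)) := by
    induction T with
    | zero => simp [mtsCost, hstart]
    | succ T ih =>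
      have hmin' : ∀ t ∈ Finset.range T, ∀ y : X,
          ℓ (t + 1) (x (t + 1)) + 2 * edist (x (t + 1)) (p (t + 1)) ≤
            ℓ (t + 1) y + 2 * edist y (p (t + 1)) := fun t ht y =>
        hmin t (Finset.mem_range.mpr (Nat.lt_succ_of_lt (Finset.mem_range.mp ht))) y
      have ih' := ih hmin'
      have hstep := ftp_step_bound (ℓ (T + 1)) (p (T + 1)) (x T) (x (T + 1)) (o T)
        (o (T + 1)) (hmin T (Finset.mem_range.mpr (Nat.lt_succ_self T)) (o (T + 1)))
      have hx : mtsCost ℓ x (T + 1) = mtsCost ℓ x T +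
          (edist (x T) (x (T + 1)) + ℓ (T + 1) (x (T + 1))) :=
        Finset.sum_range_succ _ _
      have ho : mtsCost ℓ o (T + 1) = mtsCost ℓ o T +
          (edist (o T) (o (T + 1)) + ℓ (T + 1) (o (T + 1))) :=
        Finset.sum_range_succ _ _
      have hs : ∑ t ∈ Finset.range (T + 1), edist (p (t + 1)) (o (t + 1)) =
          (∑ t ∈ Finset.range T, edist (p (t + 1)) (o (t + 1))) +
            edist (p (T + 1)) (o (T + 1)) :=
        Finset.sum_range_succ _ _
      rw [hx, ho, hs]
      calc mtsCost ℓ x T + (edist (x T) (x (T + 1)) + ℓ (T + 1) (x (T + 1))) +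
              edist (x (T + 1)) (o (T + 1))
          = mtsCost ℓ x T + (edist (x T) (x (T + 1)) + ℓ (T + 1) (x (T + 1)) +
              edist (x (T + 1)) (o (T + 1))) := by ring
        _ ≤ mtsCost ℓ x T + (edist (x T) (o T) + edist (o T) (o (T + 1)) +
              ℓ (T + 1) (o (T + 1)) + 4 * edist (p (T + 1)) (o (T + 1))) := by gcongr
        _ = (mtsCost ℓ x T + edist (x T) (o T)) + (edist (o T) (o (T + 1)) +
              ℓ (T + 1) (o (T + 1)) + 4 * edist (p (T + 1)) (o (T + 1))) := by ring
        _ ≤ (mtsCost ℓ o T + 4 * ∑ t ∈ Finset.range T, edist (p (t + 1)) (o (t + 1)))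
              + (edist (o T) (o (T + 1)) + ℓ (T + 1) (o (T + 1)) +
                4 * edist (p (T + 1)) (o (T + 1))) := by gcongr
        _ = mtsCost ℓ o T + (edist (o T) (o (T + 1)) + ℓ (T + 1) (o (T + 1))) +
              4 * ((∑ t ∈ Finset.range T, edist (p (t + 1)) (o (t + 1))) +
                edist (p (T + 1)) (o (T + 1))) := by ring
  exact le_trans (le_add_right le_rfl) key
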